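/- Let Y have law P on ℝ^{d_y}, where Y either takes values in a finite set or P has a density with respect to Lebesgue measure, and let (P, Γ, ν) be a structure satisfying the alternative hypothesis H_a: sup_{A∈C} [P(A) − ν(Γ(A))] ≠ 0, i.e. there exists A ∈ C with P(A) > ν(Γ(A)). Let Y_1, Y_2, … be i.i.d. with law P, P_n the empirical measure, G_n(A) = √n(P_n(A) − P(A)), T_n = √n · sup_{A∈C} [P_n(A) − ν(Γ(A))], C_{h_n} = {A ∈ C : P_n(A) ≥ ν(Γ(A)) − h_n}, T̃_n = sup_{A∈C_{h_n}} G_n(A), and c_n^α = inf{c : Pr(T̃_n ≤ c) ≥ 1 − α} for α ∈ (0,1). Suppose Assumptions 1 and 2 hold (as in Theorem 1: the Hausdorff separation condition on C_b and C_{b,h}, and h_n ln ln n + h_n^{−1}√(ln ln n / n) → 0). Then lim_{n→∞} Pr(T_n ≥ c_n^α) = 1. -/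

import Mathlib

open MeasureTheory Set Filter

/-- A structure (P, Γ, ν) is internally consistent if there exists a probability law π
for the pair (Y, U) with marginals P and ν such that π({(y,u) : u ∈ Γ(y)}) = 1. -/
def InternallyConsistent {Y U : Type*} [MeasurableSpace Y] [MeasurableSpace U]
    (P : MeasureTheory.Measure Y) (Γ : Y → Set U) (ν : MeasureTheory.Measure U) : Prop :=
  ∃ π : MeasureTheory.Measure (Y × U), MeasureTheory.IsProbabilityMeasure π ∧
    π.map Prod.fst = P ∧ π.map Prod.snd = ν ∧ π {p | p.2 ∈ Γ p.1} = 1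

namespace Stmt16Aux

open Topology

lemma tendsto_F_right (Q : Measure ℝ) [IsProbabilityMeasure Q] (v : ℝ) :
    Tendsto (fun n : ℕ => (Q (Iic (v + 1/(n+1)))).toReal) atTop (𝓝 ((Q (Iic v)).toReal)) := by
  have h1 : Tendsto (fun n : ℕ => Q (Iic (v + 1/(n+1)))) atTop
      (𝓝 (Q (⋂ n : ℕ, Iic (v + 1/(n+1))))) := by
    refine tendsto_measure_iInter_atTop (fun n => measurableSet_Iic.nullMeasurableSet) ?_
      ⟨0, measure_ne_top Q _⟩
    intro a b hab
    apply Iic_subset_Iic.mpr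
    have h1 : (1:ℝ)/(b+1) ≤ 1/(a+1) := by
      apply one_div_le_one_div_of_le
      · positivity
      · have : (a:ℝ) ≤ b := by exact_mod_cast hab
        linarith
    linarith
  have h2 : (⋂ n : ℕ, Iic (v + 1/(n+1))) = Iic v := by
    ext s
    simp only [mem_iInter, mem_Iic]
    constructor
    · intro hs
      by_contra hvs
      push_neg at hvs
      obtain ⟨n, hn⟩ := exists_nat_one_div_lt (sub_pos.mpr hvs)
      have := hs n
      push_cast at hn this ⊢
      linarith
    · intro hs n
      have : (0:ℝ) < 1/(n+1) := by positivity
      linarith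
  rw [h2] at h1
  exact (ENNReal.tendsto_toReal (measure_ne_top Q _)).comp h1

lemma tendsto_F_left (Q : Measure ℝ) [IsProbabilityMeasure Q] (u : ℝ) :
    Tendsto (fun n : ℕ => (Q (Iic (u - 1/(n+1)))).toReal) atTop (𝓝 ((Q (Iio u)).toReal)) := by
  have h1 : Tendsto (fun n : ℕ => Q (Iic (u - 1/(n+1)))) atTop
      (𝓝 (Q (⋃ n : ℕ, Iic (u - 1/(n+1))))) := by
    apply tendsto_measure_iUnion_atTop
    intro a b hab
    apply Iic_subset_Iic.mpr
    have h1 : (1:ℝ)/(b+1) ≤ 1/(a+1) := by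
      apply one_div_le_one_div_of_le
      · positivity
      · have : (a:ℝ) ≤ b := by exact_mod_cast hab
        linarith
    linarith
  have h2 : (⋃ n : ℕ, Iic (u - 1/(n+1))) = Iio u := by
    ext s
    simp only [mem_iUnion, mem_Iic, mem_Iio]
    constructor
    · rintro ⟨n, hn⟩
      have : (0:ℝ) < 1/(n+1) := by positivity
      linarith
    · intro hs
      obtain ⟨n, hn⟩ := exists_nat_one_div_lt (sub_pos.mpr hs)
      exact ⟨n, by push_cast at hn ⊢; linarith⟩
  rw [h2] at h1
  exact (ENNReal.tendsto_toReal (measure_ne_top Q _)).comp h1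

lemma tendsto_F_top (Q : Measure ℝ) [IsProbabilityMeasure Q] :
    Tendsto (fun n : ℕ => (Q (Iic (n:ℝ))).toReal) atTop (𝓝 1) := by
  have h1 : Tendsto (fun n : ℕ => Q (Iic (n:ℝ))) atTop (𝓝 (Q (⋃ n : ℕ, Iic (n:ℝ)))) := by
    apply tendsto_measure_iUnion_atTop
    intro a b hab
    exact Iic_subset_Iic.mpr (by exact_mod_cast hab)
  have h2 : (⋃ n : ℕ, Iic (n:ℝ)) = univ := by
    ext s
    simp only [mem_iUnion, mem_Iic, mem_univ, iff_true]
    obtain ⟨n, hn⟩ := exists_nat_ge s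
    exact ⟨n, hn⟩
  rw [h2, measure_univ] at h1
  have := (ENNReal.tendsto_toReal (by simp : (1:ENNReal) ≠ ⊤)).comp h1
  simpa [Function.comp_def] using this

lemma tendsto_F_bot (Q : Measure ℝ) [IsProbabilityMeasure Q] :
    Tendsto (fun n : ℕ => (Q (Iic (-(n:ℝ)))).toReal) atTop (𝓝 0) := by
  have h1 : Tendsto (fun n : ℕ => Q (Iic (-(n:ℝ)))) atTop
      (𝓝 (Q (⋂ n : ℕ, Iic (-(n:ℝ))))) := by
    refine tendsto_measure_iInter_atTop (fun n => measurableSet_Iic.nullMeasurableSet) ?_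
      ⟨0, measure_ne_top Q _⟩
    intro a b hab
    apply Iic_subset_Iic.mpr
    have : (a:ℝ) ≤ b := by exact_mod_cast hab
    linarith
  have h2 : (⋂ n : ℕ, Iic (-(n:ℝ))) = (∅ : Set ℝ) := by
    ext s
    simp only [mem_iInter, mem_Iic, mem_empty_iff_false, iff_false]
    push_neg
    obtain ⟨n, hn⟩ := exists_nat_gt (-s)
    exact ⟨n, by linarith⟩
  rw [h2, measure_empty] at h1
  have := (ENNReal.tendsto_toReal (by simp : (0:ENNReal) ≠ ⊤)).comp h1
  simpa [Function.comp_def] using this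


lemma oneDim_bracket (Q : Measure ℝ) [IsProbabilityMeasure Q] {ε : ℝ} (hε : 0 < ε) :
    ∃ 𝒢 : Set (Set ℝ), 𝒢.Finite ∧ (∀ I ∈ 𝒢, MeasurableSet I) ∧
      ∀ t : ℝ, (∃ I ∈ 𝒢, Iic t ⊆ I ∧ (Q (I \ Iic t)).toReal ≤ ε) ∧
               (∃ J ∈ 𝒢, J ⊆ Iic t ∧ (Q (Iic t \ J)).toReal ≤ ε) := by
  classical
  set F : ℝ → ℝ := fun t => (Q (Iic t)).toReal with hF
  have hFmono : Monotone F := fun a b hab =>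
    ENNReal.toReal_mono (measure_ne_top Q _) (measure_mono (Iic_subset_Iic.mpr hab))
  have hF0 : ∀ t, 0 ≤ F t := fun t => ENNReal.toReal_nonneg
  have hF1 : ∀ t, F t ≤ 1 := by
    intro t
    have h := ENNReal.toReal_mono (measure_ne_top Q univ) (measure_mono (subset_univ (Iic t)))
    simpa [measure_univ] using h
  have hdiff : ∀ (I : Set ℝ) (t : ℝ), Iic t ⊆ I → (Q (I \ Iic t)).toReal = (Q I).toReal - F t := by
    intro I t hsub
    rw [measure_diff hsub measurableSet_Iic.nullMeasurableSet (measure_ne_top Q _),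
      ENNReal.toReal_sub_of_le (measure_mono hsub) (measure_ne_top Q _)]
  set K := Nat.floor (1/ε) with hK
  set u : ℕ → ℝ := fun k => sSup {s | F s < (k+1)*ε} with hu
  set v : ℕ → ℝ := fun k => sInf {s | (k:ℝ)*ε ≤ F s} with hv
  set 𝒢 : Set (Set ℝ) :=
    ({univ, ∅} : Set (Set ℝ)) ∪ ⋃ k ∈ Finset.range (K+1),
      ({Iic (u k), Iio (u k), Iic (v k)} : Set (Set ℝ)) with h𝒢
  have hunivmem : (univ : Set ℝ) ∈ 𝒢 := Or.inl (by simp)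
  have hempmem : (∅ : Set ℝ) ∈ 𝒢 := Or.inl (by simp)
  have hmem : ∀ k, k ≤ K → Iic (u k) ∈ 𝒢 ∧ Iio (u k) ∈ 𝒢 ∧ Iic (v k) ∈ 𝒢 := by
    intro k hk
    have hk' : k ∈ Finset.range (K+1) := Finset.mem_range.mpr (Nat.lt_succ_of_le hk)
    refine ⟨Or.inr ?_, Or.inr ?_, Or.inr ?_⟩ <;>
      · rw [mem_iUnion₂]; exact ⟨k, hk', by simp⟩
  refine ⟨𝒢, ?_, ?_, ?_⟩
  · apply Set.Finite.union
    · exact (Set.finite_singleton _).insert _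
    · apply Set.Finite.biUnion (Finset.range (K+1)).finite_toSet
      intro k _
      exact ((Set.finite_singleton _).insert _).insert _
  · intro I hI
    rcases hI with hI | hI
    · rcases hI with hI | hI
      · simp [hI]
      · simp only [mem_singleton_iff] at hI; simp [hI]
    · rw [mem_iUnion₂] at hI
      obtain ⟨k, -, hI⟩ := hI
      simp only [mem_insert_iff, mem_singleton_iff] at hI
      rcases hI with hI | hI | hI
      · simp [hI]
      · simp [hI]
      · simp [hI]
  intro t
  set k := Nat.floor (F t / ε) with hk
  have hkle : (k:ℝ)*ε ≤ F t := by
    have h := Nat.floor_le (div_nonneg (hF0 t) hε.le)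
    calc (k:ℝ)*ε ≤ (F t / ε) * ε := by nlinarith
    _ = F t := by field_simp
  have hklt : F t < ((k:ℝ)+1)*ε := by
    have h := Nat.lt_floor_add_one (F t / ε)
    calc F t = (F t / ε) * ε := by field_simp
    _ < ((k:ℝ)+1)*ε := by nlinarith
  have hkK : k ≤ K := Nat.floor_mono ((div_le_div_iff_of_pos_right hε).mpr (hF1 t))
  constructor
  · -- upper bracket
    by_cases hbdd : BddAbove {s | F s < ((k:ℝ)+1)*ε}
    · have htA : t ∈ {s | F s < ((k:ℝ)+1)*ε} := hklt
      have htu : t ≤ u k := le_csSup hbdd htA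
      by_cases hFu : F (u k) < ((k:ℝ)+1)*ε
      · refine ⟨Iic (u k), (hmem k hkK).1, Iic_subset_Iic.mpr htu, ?_⟩
        rw [hdiff _ _ (Iic_subset_Iic.mpr htu)]
        have : (Q (Iic (u k))).toReal = F (u k) := rfl
        rw [this]; linarith
      · have htu' : t < u k := by
          rcases lt_or_eq_of_le htu with h | h
          · exact h
          · exact absurd (h ▸ hklt) hFu
        have hsub' : Iic t ⊆ Iio (u k) := fun s hs => lt_of_le_of_lt hs htu'
        refine ⟨Iio (u k), (hmem k hkK).2.1, hsub', ?_⟩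
        have hQIio : (Q (Iio (u k))).toReal ≤ ((k:ℝ)+1)*ε := by
          apply le_of_tendsto (tendsto_F_left Q (u k))
          filter_upwards with n
          have hlt : u k - 1/(n+1) < u k := by
            have : (0:ℝ) < 1/(n+1) := by positivity
            linarith
          obtain ⟨a, haA, hsa⟩ := exists_lt_of_lt_csSup ⟨t, htA⟩ hlt
          exact le_of_lt (lt_of_le_of_lt (hFmono hsa.le) haA)
        rw [hdiff (Iio (u k)) t hsub']
        linarith
    · have hall : ∀ s, F s < ((k:ℝ)+1)*ε := by
        intro s
        obtain ⟨a, haA, hsa⟩ := not_bddAbove_iff.mp hbdd s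
        exact lt_of_le_of_lt (hFmono hsa.le) haA
      have h1 : (1:ℝ) ≤ ((k:ℝ)+1)*ε :=
        le_of_tendsto (tendsto_F_top Q) (Eventually.of_forall fun n => (hall n).le)
      refine ⟨univ, hunivmem, subset_univ _, ?_⟩
      rw [hdiff univ t (subset_univ _)]
      have : (Q univ).toReal = 1 := by simp
      rw [this]; linarith
  · -- lower bracket
    by_cases hbdd : BddBelow {s | (k:ℝ)*ε ≤ F s}
    · have htB : t ∈ {s | (k:ℝ)*ε ≤ F s} := hkle
      have hvt : v k ≤ t := csInf_le hbdd htB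
      have hFv : (k:ℝ)*ε ≤ F (v k) := by
        apply ge_of_tendsto (tendsto_F_right Q (v k))
        filter_upwards with n
        have hlt : v k < v k + 1/(n+1) := by
          have : (0:ℝ) < 1/(n+1) := by positivity
          linarith
        obtain ⟨b, hbB, hbl⟩ := exists_lt_of_csInf_lt ⟨t, htB⟩ hlt
        exact le_trans hbB (hFmono hbl.le)
      refine ⟨Iic (v k), (hmem k hkK).2.2, Iic_subset_Iic.mpr hvt, ?_⟩
      have hd : (Q (Iic t \ Iic (v k))).toReal = F t - F (v k) := by
        rw [measure_diff (Iic_subset_Iic.mpr hvt) measurableSet_Iic.nullMeasurableSet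
          (measure_ne_top Q _),
          ENNReal.toReal_sub_of_le (measure_mono (Iic_subset_Iic.mpr hvt)) (measure_ne_top Q _)]
      rw [hd]; linarith
    · have hall : ∀ s, (k:ℝ)*ε ≤ F s := by
        intro s
        obtain ⟨b, hbB, hbs⟩ := not_bddBelow_iff.mp hbdd s
        exact le_trans hbB (hFmono hbs.le)
      have h0 : (k:ℝ)*ε ≤ 0 := by
        apply ge_of_tendsto (tendsto_F_bot Q)
        filter_upwards with n
        exact hall _
      refine ⟨∅, hempmem, empty_subset _, ?_⟩
      rw [diff_empty]
      have : (Q (Iic t)).toReal = F t := rfl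
      rw [this]; linarith


lemma bracket_family {XD : Type*} [Fintype XD] [MeasurableSpace XD] [MeasurableSingletonClass XD]
    {dC : ℕ} (P : Measure (XD × (Fin dC → ℝ))) [IsProbabilityMeasure P] {β : ℝ} (hβ : 0 < β) :
    ∃ ℱ : Set (Set (XD × (Fin dC → ℝ))), ℱ.Finite ∧ (∀ B ∈ ℱ, MeasurableSet B) ∧
      ∀ (AD : Set XD) (c : Fin dC → ℝ),
        (∃ B ∈ ℱ, AD ×ˢ Iic c ⊆ B ∧ (P B).toReal ≤ (P (AD ×ˢ Iic c)).toReal + β) ∧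
        (∃ B ∈ ℱ, B ⊆ AD ×ˢ Iic c ∧ (P (AD ×ˢ Iic c)).toReal ≤ (P B).toReal + β) := by
  classical
  set π : Fin dC → (XD × (Fin dC → ℝ)) → ℝ := fun j y => y.2 j with hπdef
  have hπ : ∀ j, Measurable (π j) := fun j => (measurable_pi_apply j).comp measurable_snd
  haveI hQprob : ∀ j, IsProbabilityMeasure (P.map (π j)) :=
    fun j => Measure.isProbabilityMeasure_map (hπ j).aemeasurable
  set ε' : ℝ := β / (dC + 1) with hε'def
  have hε' : 0 < ε' := by positivity
  have hεsum : (dC : ℝ) * ε' ≤ β := by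
    rw [hε'def]
    rw [div_eq_mul_inv]
    have h1 : (0:ℝ) < (dC:ℝ) + 1 := by positivity
    rw [show (dC:ℝ) * (β * ((dC:ℝ)+1)⁻¹) = ((dC:ℝ) * β) / ((dC:ℝ)+1) by ring]
    rw [div_le_iff₀ h1]
    nlinarith
  have hbr : ∀ j : Fin dC, ∃ 𝒢 : Set (Set ℝ), 𝒢.Finite ∧ (∀ I ∈ 𝒢, MeasurableSet I) ∧
      ∀ t : ℝ, (∃ I ∈ 𝒢, Iic t ⊆ I ∧ ((P.map (π j)) (I \ Iic t)).toReal ≤ ε') ∧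
               (∃ J ∈ 𝒢, J ⊆ Iic t ∧ ((P.map (π j)) (Iic t \ J)).toReal ≤ ε') :=
    fun j => oneDim_bracket (P.map (π j)) hε'
  choose 𝒢 h𝒢fin h𝒢meas h𝒢br using hbr
  set ℱ : Set (Set (XD × (Fin dC → ℝ))) :=
    (fun p : Set XD × (Fin dC → Set ℝ) => p.1 ×ˢ {x | ∀ j, x j ∈ p.2 j}) ''
      ((univ : Set (Set XD)) ×ˢ {f : Fin dC → Set ℝ | ∀ j, f j ∈ 𝒢 j}) with hℱ
  have hmemℱ : ∀ (AD : Set XD) (f : Fin dC → Set ℝ), (∀ j, f j ∈ 𝒢 j) →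
      AD ×ˢ {x | ∀ j, x j ∈ f j} ∈ ℱ := by
    intro AD f hf
    exact ⟨(AD, f), ⟨mem_univ _, hf⟩, rfl⟩
  -- the key estimate
  have key : ∀ (D E : Set (XD × (Fin dC → ℝ))) (S : Fin dC → Set ℝ),
      (∀ j, MeasurableSet (S j)) → (E \ D ⊆ ⋃ j, (π j) ⁻¹' (S j)) →
      (∀ j, ((P.map (π j)) (S j)).toReal ≤ ε') → (P E).toReal ≤ (P D).toReal + β := by
    intro D E S hSm hsub hSb
    have h1 : P E ≤ P D + P (E \ D) := by
      calc P E ≤ P ((E \ D) ∪ D) := measure_mono (subset_diff_union E D)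
      _ ≤ P (E \ D) + P D := measure_union_le _ _
      _ = P D + P (E \ D) := by ring
    have h2 : P (E \ D) ≤ ∑ j : Fin dC, (P.map (π j)) (S j) := by
      calc P (E \ D) ≤ P (⋃ j, (π j) ⁻¹' (S j)) := measure_mono hsub
      _ ≤ ∑' j, P ((π j) ⁻¹' (S j)) := measure_iUnion_le _
      _ = ∑ j : Fin dC, P ((π j) ⁻¹' (S j)) := tsum_fintype _
      _ = ∑ j : Fin dC, (P.map (π j)) (S j) := by
          refine Finset.sum_congr rfl fun j _ => ?_
          rw [Measure.map_apply (hπ j) (hSm j)]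
    have h3 : ∑ j : Fin dC, (P.map (π j)) (S j) ≤ ENNReal.ofReal β := by
      calc ∑ j : Fin dC, (P.map (π j)) (S j) ≤ ∑ _j : Fin dC, ENNReal.ofReal ε' := by
            refine Finset.sum_le_sum fun j _ => ?_
            have := hSb j
            calc (P.map (π j)) (S j) = ENNReal.ofReal (((P.map (π j)) (S j)).toReal) :=
                  (ENNReal.ofReal_toReal (measure_ne_top _ _)).symm
            _ ≤ ENNReal.ofReal ε' := ENNReal.ofReal_le_ofReal this
      _ = (dC : ENNReal) * ENNReal.ofReal ε' := by
            rw [Finset.sum_const, Finset.card_univ, Fintype.card_fin, nsmul_eq_mul]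
      _ = ENNReal.ofReal ((dC : ℝ) * ε') := by
            rw [ENNReal.ofReal_mul (by positivity : (0:ℝ) ≤ (dC:ℝ))]
            congr 1
            exact (ENNReal.ofReal_natCast dC).symm
      _ ≤ ENNReal.ofReal β := ENNReal.ofReal_le_ofReal hεsum
    have h4 : P E ≤ P D + ENNReal.ofReal β := h1.trans (add_le_add le_rfl (h2.trans h3))
    have h5 := ENNReal.toReal_mono
      (ENNReal.add_ne_top.mpr ⟨measure_ne_top P D, ENNReal.ofReal_ne_top⟩) h4
    rwa [ENNReal.toReal_add (measure_ne_top P D) ENNReal.ofReal_ne_top,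
      ENNReal.toReal_ofReal hβ.le] at h5
  refine ⟨ℱ, ?_, ?_, ?_⟩
  · apply Set.Finite.image
    exact Set.Finite.prod Set.finite_univ (Set.Finite.pi' h𝒢fin)
  · rintro B ⟨⟨AD, f⟩, ⟨-, hf⟩, rfl⟩
    refine MeasurableSet.prod (AD.toFinite.measurableSet) ?_
    have : {x : Fin dC → ℝ | ∀ j, x j ∈ f j} = ⋂ j, (fun x : Fin dC → ℝ => x j) ⁻¹' f j := by
      ext x; simp
    rw [this]
    exact MeasurableSet.iInter fun j => (measurable_pi_apply j) (h𝒢meas j _ (hf j))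
  intro AD c
  constructor
  · -- upper bracket
    have hI : ∀ j : Fin dC, ∃ I ∈ 𝒢 j, Iic (c j) ⊆ I ∧
        ((P.map (π j)) (I \ Iic (c j))).toReal ≤ ε' := fun j => (h𝒢br j (c j)).1
    choose I hImem hIsub hIb using hI
    refine ⟨AD ×ˢ {x | ∀ j, x j ∈ I j}, hmemℱ AD I hImem, ?_, ?_⟩
    · rintro ⟨d, x⟩ ⟨hd, hx⟩
      exact ⟨hd, fun j => hIsub j (hx j)⟩
    · refine key (AD ×ˢ Iic c) _ (fun j => I j \ Iic (c j))
        (fun j => (h𝒢meas j _ (hImem j)).diff measurableSet_Iic) ?_ hIb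
      rintro ⟨d, x⟩ ⟨⟨hd, hx⟩, hA⟩
      have hxc : ¬ x ≤ c := by
        intro hxc
        exact hA ⟨hd, hxc⟩
      rw [Pi.le_def] at hxc
      push_neg at hxc
      obtain ⟨j, hj⟩ := hxc
      exact mem_iUnion.mpr ⟨j, ⟨hx j, fun hmem => (not_le.mpr hj) hmem⟩⟩
  · -- lower bracket
    have hJ : ∀ j : Fin dC, ∃ J ∈ 𝒢 j, J ⊆ Iic (c j) ∧
        ((P.map (π j)) (Iic (c j) \ J)).toReal ≤ ε' := fun j => (h𝒢br j (c j)).2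
    choose J hJmem hJsub hJb using hJ
    refine ⟨AD ×ˢ {x | ∀ j, x j ∈ J j}, hmemℱ AD J hJmem, ?_, ?_⟩
    · rintro ⟨d, x⟩ ⟨hd, hx⟩
      exact ⟨hd, fun j => hJsub j (hx j)⟩
    · refine key _ (AD ×ˢ Iic c) (fun j => Iic (c j) \ J j)
        (fun j => measurableSet_Iic.diff (h𝒢meas j _ (hJmem j))) ?_ hJb
      rintro ⟨d, x⟩ ⟨⟨hd, hx⟩, hB⟩
      have : ¬ ∀ j, x j ∈ J j := by
        intro hall
        exact hB ⟨hd, hall⟩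
      push_neg at this
      obtain ⟨j, hj⟩ := this
      exact mem_iUnion.mpr ⟨j, ⟨hx j, hj⟩⟩


open ProbabilityTheory in
lemma empirical_tendsto {Ω : Type*} [MeasurableSpace Ω] (μ : Measure Ω)
    [IsProbabilityMeasure μ] {α' : Type*} [MeasurableSpace α'] (P : Measure α')
    [IsProbabilityMeasure P]
    (Y : ℕ → Ω → α') (hYmeas : ∀ i, Measurable (Y i))
    (hYindep : ProbabilityTheory.iIndepFun Y μ)
    (hYident : ∀ i, μ.map (Y i) = P) (B : Set α') (hB : MeasurableSet B)
    {ε₀ : ℝ} (hε₀ : 0 < ε₀) :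
    Tendsto (fun n : ℕ => μ {ω | ε₀ ≤
      |(∑ i ∈ Finset.range n, B.indicator (fun _ => (1:ℝ)) (Y i ω)) / n - (P B).toReal|})
      atTop (𝓝 0) := by
  classical
  set φ : α' → ℝ := B.indicator (fun _ => (1:ℝ)) with hφdef
  have hφ : Measurable φ := measurable_const.indicator hB
  set X : ℕ → Ω → ℝ := fun i ω => φ (Y i ω) with hX
  have hmeas : ∀ i, Measurable (X i) := fun i => hφ.comp (hYmeas i)
  have hbd : ∀ z, ‖φ z‖ ≤ 1 := by
    intro z
    rw [hφdef]
    by_cases hz : z ∈ B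
    · simp [Set.indicator_of_mem hz]
    · simp [Set.indicator_of_notMem hz]
  have hint : Integrable (X 0) μ :=
    ⟨(hmeas 0).aestronglyMeasurable, HasFiniteIntegral.of_bounded (ae_of_all _ fun ω => hbd _)⟩
  have hindep : Pairwise (Function.onFun (IndepFun · · μ) X) := by
    intro i j hij
    exact (hYindep.indepFun hij).comp hφ hφ
  have hident : ∀ i, IdentDistrib (X i) (X 0) μ μ := by
    intro i
    refine ⟨(hmeas i).aemeasurable, (hmeas 0).aemeasurable, ?_⟩
    show μ.map (φ ∘ Y i) = μ.map (φ ∘ Y 0)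
    rw [← Measure.map_map hφ (hYmeas i), ← Measure.map_map hφ (hYmeas 0), hYident i, hYident 0]
  have hexp : μ[X 0] = (P B).toReal := by
    have h1 : μ[X 0] = ∫ z, φ z ∂(μ.map (Y 0)) :=
      (integral_map (hYmeas 0).aemeasurable hφ.aestronglyMeasurable).symm
    rw [h1, hYident 0, hφdef]
    rw [integral_indicator_const (1:ℝ) hB]
    simp [measureReal_def]
  have slln := strong_law_ae_real X hint hindep hident
  rw [hexp] at slln
  have hfm : ∀ n : ℕ, AEStronglyMeasurable
      (fun ω => (∑ i ∈ Finset.range n, X i ω) / (n:ℝ)) μ := by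
    intro n
    exact ((Finset.measurable_sum _ fun i _ => hmeas i).div_const _).aestronglyMeasurable
  have htm : TendstoInMeasure μ (fun n ω => (∑ i ∈ Finset.range n, X i ω) / (n:ℝ)) atTop
      (fun _ => (P B).toReal) :=
    tendstoInMeasure_of_tendsto_ae hfm slln
  have := tendstoInMeasure_iff_dist.mp htm ε₀ hε₀
  simpa only [Real.dist_eq] using this

end Stmt16Aux

open Topology


/-- Theorem 3 of the paper: consistency of the test of internal
consistency. The observable Y = (D, C) has a discrete component D in the finite set 𝔛_D
and a continuous component C of dimension d_C; P is its law (either supported on a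
finite set or with a density with respect to counting ⊗ Lebesgue measure); the structure
(P, Γ, ν) is internally consistent. C is the class of sets A_D × (−∞, c] and their
complements; m(A) = ν(Γ(A)) (ν-outer measure of the image Γ(A) = ⋃_{a ∈ A} Γ(a));
P_n is the empirical measure of an i.i.d. sample from P, G_n(A) = √n (P_n(A) − P(A)),
T_n = √n sup_{A ∈ C} [P_n(A) − m(A)], T̃_n = sup over the estimated class
C_{h_n} = {A ∈ C : P_n(A) ≥ m(A) − h_n} of G_n(A), and c_n^α is the (1−α)-quantile of
T̃_n. Under Assumption 1 (the Hausdorff separation condition on the binding class) and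
Assumption 2 (h_n ln ln n + h_n⁻¹ √(ln ln n / n) → 0), if the alternative hypothesis
H_a holds, i.e. some A ∈ C has P(A) > ν(Γ(A)), then Pr(T_n ≥ c_n^α) → 1. -/
theorem stmt_16 {XD : Type*} [Fintype XD] [MeasurableSpace XD] [MeasurableSingletonClass XD]
    [MetricSpace XD] {dC du : ℕ}
    (P : Measure (XD × (Fin dC → ℝ))) [IsProbabilityMeasure P]
    (hP : (∃ S : Set (XD × (Fin dC → ℝ)), S.Finite ∧ P S = 1) ∨
      P ≪ (Measure.count : Measure XD).prod (volume : Measure (Fin dC → ℝ)))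
    (ν : Measure (Fin du → ℝ)) [IsProbabilityMeasure ν]
    (Γ : (XD × (Fin dC → ℝ)) → Set (Fin du → ℝ))
    (hΓmeas : ∀ O : Set (Fin du → ℝ), IsOpen O → MeasurableSet {y | (Γ y ∩ O).Nonempty})
    (hΓne : ∀ y, (Γ y).Nonempty) (hΓcl : ∀ y, IsClosed (Γ y))
    {Ω : Type*} [MeasurableSpace Ω] (μ : Measure Ω) [IsProbabilityMeasure μ]
    (Y : ℕ → Ω → XD × (Fin dC → ℝ)) (hYmeas : ∀ i, Measurable (Y i))
    (hYindep : ProbabilityTheory.iIndepFun Y μ)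
    (hYident : ∀ i, μ.map (Y i) = P)
    -- the class C of sets A_D × (−∞, c] and their complements
    (𝓒 : Set (Set (XD × (Fin dC → ℝ))))
    (h𝓒 : 𝓒 = {S | ∃ (AD : Set XD) (c : Fin dC → ℝ),
      S = AD ×ˢ Set.Iic c ∨ S = (AD ×ˢ Set.Iic c)ᶜ})
    -- m(A) = ν(Γ(A)), outer measure of the image of A by Γ
    (m : Set (XD × (Fin dC → ℝ)) → ℝ)
    (hm : ∀ A, m A = (ν (⋃ a ∈ A, Γ a)).toReal)
    -- the alternative hypothesis H_a: failure of internal consistency on the class 𝓒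
    (halt : ∃ A ∈ 𝓒, (P A).toReal > m A)
    -- empirical measure and empirical process
    (Pn : ℕ → Ω → Set (XD × (Fin dC → ℝ)) → ℝ)
    (hPn : ∀ n ω A,
      Pn n ω A = (∑ i ∈ Finset.range n, A.indicator (fun _ => (1:ℝ)) (Y i ω)) / n)
    (Gn : ℕ → Ω → Set (XD × (Fin dC → ℝ)) → ℝ)
    (hGn : ∀ n ω A, Gn n ω A = Real.sqrt (n : ℝ) * (Pn n ω A - (P A).toReal))
    -- test statistic, localized statistic and its quantile
    (T : ℕ → Ω → ℝ)
    (hT : ∀ n ω, T n ω = Real.sqrt (n : ℝ) * sSup {x : ℝ | ∃ A ∈ 𝓒, x = Pn n ω A - m A})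
    (h : ℕ → ℝ)
    (Ttil : ℕ → Ω → ℝ)
    (hTtil : ∀ n ω,
      Ttil n ω = sSup {x : ℝ | ∃ A ∈ 𝓒, Pn n ω A ≥ m A - h n ∧ x = Gn n ω A})
    (α : ℝ) (hα : α ∈ Set.Ioo (0:ℝ) 1)
    (c : ℕ → ℝ)
    (hc : ∀ n, c n = sInf {x : ℝ | μ {ω | Ttil n ω ≤ x} ≥ ENNReal.ofReal (1 - α)})
    -- Assumption 1: Hausdorff separation of the binding class
    (hA1 : ∃ K > (0:ℝ), ∃ η ∈ Set.Ioo (0:ℝ) 1, ∃ h₀ > (0:ℝ),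
      ∀ hh ∈ Set.Ioc (0:ℝ) h₀, ∀ A ∈ 𝓒, (P A).toReal ≥ m A - hh →
        ∃ Ab ∈ 𝓒, (P Ab).toReal = m Ab ∧ Ab ⊆ A ∧
          Metric.hausdorffDist A Ab ≤ K * hh ^ η)
    -- Assumption 2: rate condition on the bandwidth
    (hA2pos : ∀ n, 0 < h n)
    (hA2 : Tendsto (fun n : ℕ => h n * Real.log (Real.log n) +
        (h n)⁻¹ * Real.sqrt (Real.log (Real.log n) / n)) atTop (nhds 0)) :
    Tendsto (fun n : ℕ => (μ {ω | T n ω ≥ c n}).toReal) atTop (nhds 1) := by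
  classical
  obtain ⟨A₀, hA₀𝓒, hA₀gt⟩ := halt
  set δ : ℝ := (P A₀).toReal - m A₀ with hδdef
  have hδ : 0 < δ := by simp only [hδdef]; linarith
  have hδ8 : (0:ℝ) < δ/8 := by linarith
  -- measurability of class members
  have hIicMeas : ∀ cc : Fin dC → ℝ, MeasurableSet (Iic cc) := by
    intro cc
    have hset : Iic cc = ⋂ j, (fun x : Fin dC → ℝ => x j) ⁻¹' (Iic (cc j)) := by
      ext x; simp [Pi.le_def]
    rw [hset]
    exact MeasurableSet.iInter fun j => (measurable_pi_apply j) measurableSet_Iic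
  have h𝓒meas : ∀ A ∈ 𝓒, MeasurableSet A := by
    intro A hA
    rw [h𝓒] at hA
    obtain ⟨AD, cc, hf | hf⟩ := hA
    · rw [hf]; exact (AD.toFinite.measurableSet).prod (hIicMeas cc)
    · rw [hf]; exact ((AD.toFinite.measurableSet).prod (hIicMeas cc)).compl
  -- basic Pn facts
  have hPn0 : ∀ (n : ℕ) (ω : Ω) (A : Set (XD × (Fin dC → ℝ))), 0 ≤ Pn n ω A := by
    intro n ω A
    rw [hPn]
    exact div_nonneg (Finset.sum_nonneg fun i _ =>
      Set.indicator_nonneg (fun _ _ => zero_le_one) _) (Nat.cast_nonneg n)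
  have hind1 : ∀ (A : Set (XD × (Fin dC → ℝ))) z, A.indicator (fun _ => (1:ℝ)) z ≤ 1 := by
    intro A z
    by_cases hz : z ∈ A
    · simp [Set.indicator_of_mem hz]
    · simp [Set.indicator_of_notMem hz]
  have hPn1 : ∀ (n : ℕ) (ω : Ω) (A : Set (XD × (Fin dC → ℝ))), Pn n ω A ≤ 1 := by
    intro n ω A
    rw [hPn]
    apply div_le_one_of_le₀
    · calc (∑ i ∈ Finset.range n, A.indicator (fun _ => (1:ℝ)) (Y i ω))
          ≤ ∑ _i ∈ Finset.range n, (1:ℝ) := Finset.sum_le_sum fun i _ => hind1 A _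
      _ = n := by simp
    · exact Nat.cast_nonneg n
  have hPnmono : ∀ (n : ℕ) (ω : Ω) (A B : Set (XD × (Fin dC → ℝ))), A ⊆ B →
      Pn n ω A ≤ Pn n ω B := by
    intro n ω A B hAB
    rw [hPn, hPn, div_eq_mul_inv, div_eq_mul_inv]
    refine mul_le_mul_of_nonneg_right (Finset.sum_le_sum fun i _ => ?_)
      (inv_nonneg.mpr (Nat.cast_nonneg n))
    exact Set.indicator_le_indicator_of_subset hAB (fun _ => zero_le_one) _
  have hPnuniv : ∀ (n : ℕ) (ω : Ω), 1 ≤ n → Pn n ω univ = 1 := by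
    intro n ω hn
    rw [hPn]
    have h1 : ∀ i, (univ : Set (XD × (Fin dC → ℝ))).indicator (fun _ => (1:ℝ)) (Y i ω) = 1 := by
      intro i; simp
    rw [Finset.sum_congr rfl fun i _ => h1 i]
    rw [Finset.sum_const, Finset.card_range, nsmul_eq_mul, mul_one]
    exact div_self (Nat.cast_ne_zero.mpr (by omega))
  -- class facts
  have hUnivMem : (univ : Set (XD × (Fin dC → ℝ))) ∈ 𝓒 := by
    rw [h𝓒]
    exact ⟨∅, 0, Or.inr (by simp)⟩
  have hm0 : ∀ A, 0 ≤ m A := fun A => by rw [hm]; exact ENNReal.toReal_nonneg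
  have hm1 : ∀ A, m A ≤ 1 := by
    intro A
    rw [hm]
    have h1 := ENNReal.toReal_mono ENNReal.one_ne_top (prob_le_one (μ := ν) (s := ⋃ a ∈ A, Γ a))
    simpa using h1
  have hPA0 : ∀ A : Set (XD × (Fin dC → ℝ)), 0 ≤ (P A).toReal := fun _ => ENNReal.toReal_nonneg
  have hPuniv : (P (univ : Set (XD × (Fin dC → ℝ)))).toReal = 1 := by simp
  have hcomplReal : ∀ s : Set (XD × (Fin dC → ℝ)), MeasurableSet s →
      (P sᶜ).toReal = 1 - (P s).toReal := by
    intro s hs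
    rw [prob_compl_eq_one_sub hs, ENNReal.toReal_sub_of_le prob_le_one ENNReal.one_ne_top,
      ENNReal.toReal_one]
  -- bracket family
  obtain ⟨ℱ₀, hℱ₀fin, hℱ₀meas, hℱ₀br⟩ := Stmt16Aux.bracket_family P hδ8
  set ℱ : Set (Set (XD × (Fin dC → ℝ))) := insert A₀ (ℱ₀ ∪ compl '' ℱ₀) with hℱdef
  have hℱfin : ℱ.Finite := (hℱ₀fin.union (hℱ₀fin.image _)).insert _
  have hℱmeas : ∀ B ∈ ℱ, MeasurableSet B := by
    rintro B hB
    rcases hB with hB | hB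
    · rw [hB]; exact h𝓒meas A₀ hA₀𝓒
    rcases hB with hB | ⟨C, hC, rfl⟩
    · exact hℱ₀meas B hB
    · exact (hℱ₀meas C hC).compl
  -- upper bracket for all A ∈ 𝓒
  have hupper : ∀ A ∈ 𝓒, ∃ B ∈ ℱ, A ⊆ B ∧ (P B).toReal ≤ (P A).toReal + δ/8 := by
    intro A hA
    rw [h𝓒] at hA
    obtain ⟨AD, cc, hf | hf⟩ := hA
    · obtain ⟨B, hBℱ₀, hsub, hbd⟩ := (hℱ₀br AD cc).1
      exact ⟨B, mem_insert_of_mem _ (Or.inl hBℱ₀), by rw [hf]; exact hsub, by rw [hf]; exact hbd⟩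
    · obtain ⟨L, hLℱ₀, hsub, hbd⟩ := (hℱ₀br AD cc).2
      refine ⟨Lᶜ, mem_insert_of_mem _ (Or.inr ⟨L, hLℱ₀, rfl⟩), ?_, ?_⟩
      · rw [hf]; exact compl_subset_compl.mpr hsub
      · rw [hf, hcomplReal L (hℱ₀meas L hLℱ₀),
          hcomplReal _ ((AD.toFinite.measurableSet).prod (hIicMeas cc))]
        linarith
  -- on the good event, the empirical process is uniformly small over 𝓒
  set W : ℕ → Set Ω := fun n => {ω | ∀ B ∈ ℱ, |Pn n ω B - (P B).toReal| ≤ δ/8} with hWdef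
  have hPnclose : ∀ (n : ℕ) (ω : Ω), ω ∈ W n → ∀ A ∈ 𝓒,
      Pn n ω A - (P A).toReal ≤ δ/4 := by
    intro n ω hω A hA
    obtain ⟨B, hBℱ, hsub, hbd⟩ := hupper A hA
    have h1 := abs_le.mp (hω B hBℱ)
    have h2 := hPnmono n ω A B hsub
    linarith [h1.2]
  -- measurability of ω ↦ Pn n ω B
  have hPnmeasω : ∀ (n : ℕ) (B : Set (XD × (Fin dC → ℝ))), MeasurableSet B →
      Measurable (fun ω => Pn n ω B) := by
    intro n B hB
    have h1 : (fun ω => Pn n ω B) =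
        fun ω => (∑ i ∈ Finset.range n, B.indicator (fun _ => (1:ℝ)) (Y i ω)) / n :=
      funext fun ω => hPn n ω B
    rw [h1]
    exact (Finset.measurable_sum _ fun i _ =>
      (measurable_const.indicator hB).comp (hYmeas i)).div_const _
  have hWmeas : ∀ n, MeasurableSet (W n) := by
    intro n
    have h1 : W n = ⋂ B ∈ ℱ, {ω | |Pn n ω B - (P B).toReal| ≤ δ/8} := by
      ext ω; simp [hWdef, mem_iInter]
    rw [h1]
    refine hℱfin.measurableSet_biInter fun B hB => ?_
    exact measurableSet_le (((hPnmeasω n B (hℱmeas B hB)).sub measurable_const).abs)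
      measurable_const
  -- μ (W n) → 1
  have hbad : ∀ B ∈ ℱ, Tendsto (fun n : ℕ =>
      μ {ω | δ/8 ≤ |Pn n ω B - (P B).toReal|}) atTop (𝓝 0) := by
    intro B hB
    have h1 := Stmt16Aux.empirical_tendsto μ P Y hYmeas hYindep hYident B (hℱmeas B hB) hδ8
    have h2 : ∀ n : ℕ, {ω | δ/8 ≤ |Pn n ω B - (P B).toReal|} =
        {ω | δ/8 ≤ |(∑ i ∈ Finset.range n, B.indicator (fun _ => (1:ℝ)) (Y i ω)) / n
           - (P B).toReal|} := by
      intro n; ext ω; rw [mem_setOf_eq, mem_setOf_eq, hPn]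
    simpa only [h2] using h1
  have hWc0 : Tendsto (fun n => μ ((W n)ᶜ)) atTop (𝓝 0) := by
    have hsum : Tendsto (fun n : ℕ => ∑ B ∈ hℱfin.toFinset,
        μ {ω | δ/8 ≤ |Pn n ω B - (P B).toReal|}) atTop (𝓝 0) := by
      have h1 := tendsto_finset_sum hℱfin.toFinset
        (fun B hB => hbad B (hℱfin.mem_toFinset.mp hB))
      simpa using h1
    refine tendsto_of_tendsto_of_tendsto_of_le_of_le tendsto_const_nhds hsum
      (fun n => zero_le) (fun n => ?_)
    have hsub : (W n)ᶜ ⊆ ⋃ B ∈ hℱfin.toFinset, {ω | δ/8 ≤ |Pn n ω B - (P B).toReal|} := by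
      intro ω hω
      rw [mem_compl_iff, hWdef] at hω
      simp only [mem_setOf_eq, not_forall] at hω
      obtain ⟨B, hBℱ, hBgt⟩ := hω
      exact mem_biUnion (hℱfin.mem_toFinset.mpr hBℱ) (le_of_lt (not_le.mp hBgt))
    exact (measure_mono hsub).trans (measure_biUnion_finset_le _ _)
  have hWtoReal : ∀ n, (μ (W n)).toReal = 1 - (μ ((W n)ᶜ)).toReal := by
    intro n
    have h1 := prob_compl_eq_one_sub (μ := μ) (hWmeas n).compl
    rw [compl_compl] at h1
    rw [h1, ENNReal.toReal_sub_of_le prob_le_one ENNReal.one_ne_top, ENNReal.toReal_one]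
  have hWtend : Tendsto (fun n => (μ (W n)).toReal) atTop (𝓝 1) := by
    have h0 : Tendsto (fun n => (μ ((W n)ᶜ)).toReal) atTop (𝓝 0) := by
      have := (ENNReal.tendsto_toReal (by simp : (0:ENNReal) ≠ ⊤)).comp hWc0
      simpa [Function.comp_def] using this
    have h1 : Tendsto (fun n => 1 - (μ ((W n)ᶜ)).toReal) atTop (𝓝 (1 - 0)) :=
      tendsto_const_nhds.sub h0
    simp only [sub_zero] at h1
    exact h1.congr (fun n => (hWtoReal n).symm)
  -- key inclusion
  have key : ∀ n : ℕ, 1 ≤ n → 1 - α ≤ (μ (W n)).toReal → W n ⊆ {ω | T n ω ≥ c n} := by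
    intro n hn hWα ω hω
    have hWμ : ENNReal.ofReal (1-α) ≤ μ (W n) := ENNReal.ofReal_le_of_le_toReal hWα
    have hsqrt : (0:ℝ) ≤ Real.sqrt n := Real.sqrt_nonneg _
    have hGnBdd : ∀ ω' : Ω, BddAbove {x : ℝ | ∃ A ∈ 𝓒, Pn n ω' A ≥ m A - h n ∧ x = Gn n ω' A} := by
      intro ω'
      refine ⟨Real.sqrt n, ?_⟩
      rintro x ⟨A, hA, -, rfl⟩
      rw [hGn]
      calc Real.sqrt n * (Pn n ω' A - (P A).toReal) ≤ Real.sqrt n * 1 :=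
        mul_le_mul_of_nonneg_left (by linarith [hPn1 n ω' A, hPA0 A]) hsqrt
      _ = Real.sqrt n := mul_one _
    have hzero_mem : ∀ ω' : Ω,
        (0:ℝ) ∈ {x : ℝ | ∃ A ∈ 𝓒, Pn n ω' A ≥ m A - h n ∧ x = Gn n ω' A} := by
      intro ω'
      refine ⟨univ, hUnivMem, ?_, ?_⟩
      · rw [hPnuniv n ω' hn]
        have := hm1 univ
        have := hA2pos n
        linarith
      · rw [hGn, hPnuniv n ω' hn, hPuniv]
        ring
    have hTtil0 : ∀ ω' : Ω, 0 ≤ Ttil n ω' := by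
      intro ω'
      rw [hTtil]
      exact le_csSup (hGnBdd ω') (hzero_mem ω')
    have hTtilW : ∀ ω' ∈ W n, Ttil n ω' ≤ Real.sqrt n * (δ/4) := by
      intro ω' hω'
      rw [hTtil]
      apply Real.sSup_le
      · rintro x ⟨A, hA, -, rfl⟩
        rw [hGn]
        exact mul_le_mul_of_nonneg_left (hPnclose n ω' hω' A hA) hsqrt
      · positivity
    have hcn : c n ≤ Real.sqrt n * (δ/4) := by
      rw [hc]
      apply csInf_le
      · refine ⟨0, ?_⟩
        rintro x hx
        by_contra hx0
        push_neg at hx0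
        have hempty : {ω' | Ttil n ω' ≤ x} = (∅ : Set Ω) := by
          ext ω'
          simp only [mem_setOf_eq, mem_empty_iff_false, iff_false, not_le]
          exact lt_of_lt_of_le hx0 (hTtil0 ω')
        rw [mem_setOf_eq, hempty, measure_empty] at hx
        have hpos : (0:ENNReal) < ENNReal.ofReal (1-α) :=
          ENNReal.ofReal_pos.mpr (by linarith [hα.2])
        exact absurd hx (by simpa using hpos.not_ge)
      · show μ {ω' | Ttil n ω' ≤ Real.sqrt n * (δ/4)} ≥ ENNReal.ofReal (1-α)
        refine le_trans hWμ (measure_mono ?_)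
        intro ω' hω'
        exact hTtilW ω' hω'
    have hTlow : Real.sqrt n * (δ/2) ≤ T n ω := by
      rw [hT]
      have hbdd : BddAbove {x : ℝ | ∃ A ∈ 𝓒, x = Pn n ω A - m A} := by
        refine ⟨1, ?_⟩
        rintro x ⟨A, hA, rfl⟩
        linarith [hPn1 n ω A, hm0 A]
      have hmem : Pn n ω A₀ - m A₀ ∈ {x : ℝ | ∃ A ∈ 𝓒, x = Pn n ω A - m A} :=
        ⟨A₀, hA₀𝓒, rfl⟩
      have h2 := abs_le.mp (hω A₀ (mem_insert _ _))
      have h1 : δ/2 ≤ Pn n ω A₀ - m A₀ := by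
        simp only [hδdef] at *
        linarith [h2.1]
      calc Real.sqrt n * (δ/2) ≤ Real.sqrt n * (Pn n ω A₀ - m A₀) :=
            mul_le_mul_of_nonneg_left h1 hsqrt
      _ ≤ Real.sqrt n * sSup {x : ℝ | ∃ A ∈ 𝓒, x = Pn n ω A - m A} :=
            mul_le_mul_of_nonneg_left (le_csSup hbdd hmem) hsqrt
    show T n ω ≥ c n
    have h3 : Real.sqrt n * (δ/4) ≤ Real.sqrt n * (δ/2) :=
      mul_le_mul_of_nonneg_left (by linarith) hsqrt
    linarith
  -- conclusion
  have hαlt : (1:ℝ) - α < 1 := by linarith [hα.1]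
  have hev1 : ∀ᶠ n in atTop, 1 - α ≤ (μ (W n)).toReal :=
    hWtend.eventually (eventually_ge_nhds hαlt)
  have hfinal : ∀ᶠ n in atTop, (μ (W n)).toReal ≤ (μ {ω | T n ω ≥ c n}).toReal := by
    filter_upwards [hev1, eventually_ge_atTop 1] with n h1 h2
    exact ENNReal.toReal_mono (measure_ne_top μ _) (measure_mono (key n h2 h1))
  have hub : ∀ n : ℕ, (μ {ω | T n ω ≥ c n}).toReal ≤ 1 := by
    intro n
    have h := ENNReal.toReal_mono ENNReal.one_ne_top (prob_le_one (μ := μ) (s := {ω | T n ω ≥ c n}))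
    simpa using h
  exact tendsto_of_tendsto_of_tendsto_of_le_of_le' hWtend tendsto_const_nhds hfinal
    (Eventually.of_forall hub)
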